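/- Let d ≥ 1 and let s = (s_1,…,s_d) be a strictly increasing sequence of positive integers. The topological interior of the s-lecture hall polytope P_d^{(s)} contains exactly one lattice point if and only if s_1 = 2 and s_{i+1} ≤ 2 s_i for all 1 ≤ i ≤ d−1. Moreover, in this case the unique interior lattice point is the point p ∈ ℤ^d with p_i = s_i − 1 for all 1 ≤ i ≤ d. -/

import Mathlib

open Pointwise BigOperators

/-- The `s`-lecture hall polytope
`P_d^(s) = {x ∈ ℝ^d : 0 ≤ x_1/s_1 ≤ x_2/s_2 ≤ ⋯ ≤ x_d/s_d ≤ 1}`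
(indices shifted down by one: `x i` is the paper's `x_{i+1}`). -/
def lectureHall (d : ℕ) (s : Fin d → ℕ) : Set (Fin d → ℝ) :=
  {x | (∀ h : 0 < d, 0 ≤ x ⟨0, h⟩ / (s ⟨0, h⟩ : ℝ)) ∧
       (∀ i : Fin d, ∀ hi : (i : ℕ) + 1 < d,
          x i / (s i : ℝ) ≤ x ⟨(i : ℕ) + 1, hi⟩ / (s ⟨(i : ℕ) + 1, hi⟩ : ℝ)) ∧
       (∀ h : 0 < d,
          x ⟨d - 1, Nat.sub_lt h Nat.one_pos⟩ / (s ⟨d - 1, Nat.sub_lt h Nat.one_pos⟩ : ℝ) ≤ 1)}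

/-- The set of lattice points of `ℝ^d`. -/
def latticePoints (d : ℕ) : Set (Fin d → ℝ) := {x | ∀ i, ∃ n : ℤ, x i = (n : ℝ)}

/-- The dual polytope `Q^∨ = {y : ⟨x,y⟩ ≤ 1 for all x ∈ Q}`. -/
def dualPolytope {d : ℕ} (Q : Set (Fin d → ℝ)) : Set (Fin d → ℝ) :=
  {y | ∀ x ∈ Q, ∑ i, x i * y i ≤ 1}

/-- A full-dimensional lattice polytope is reflexive if it is Fano (the only
lattice point of its interior is the origin) and its dual polytope is a lattice
polytope. -/
def IsReflexive {d : ℕ} (Q : Set (Fin d → ℝ)) : Prop :=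
  interior Q ∩ latticePoints d = {0} ∧
  dualPolytope Q = convexHull ℝ (dualPolytope Q ∩ latticePoints d)

/-- Unimodular equivalence: `Q = f_U(P) + w` with `U` an integer matrix of
determinant `±1` and `w` an integer vector. -/
def UnimodularlyEquivalent {d : ℕ} (P Q : Set (Fin d → ℝ)) : Prop :=
  ∃ (U : Matrix (Fin d) (Fin d) ℤ) (w : Fin d → ℤ),
    (U.det = 1 ∨ U.det = -1) ∧
    Q = (fun x => Matrix.vecMul x (U.map (fun a : ℤ => (a : ℝ))) + fun i => (w i : ℝ)) '' P

/-- `P` is Gorenstein of index `c`: `c` is the smallest positive integer such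
that `cP` is unimodularly equivalent to a reflexive polytope. -/
def GorensteinOfIndex {d : ℕ} (P : Set (Fin d → ℝ)) (c : ℕ) : Prop :=
  0 < c ∧
  (∃ Q : Set (Fin d → ℝ), UnimodularlyEquivalent ((c : ℝ) • P) Q ∧ IsReflexive Q) ∧
  ∀ c' : ℕ, 0 < c' →
    (∃ Q : Set (Fin d → ℝ), UnimodularlyEquivalent ((c' : ℝ) • P) Q ∧ IsReflexive Q) →
    c ≤ c'

/-- `P` is translation equivalent to a reflexive polytope. -/
def TranslationReflexive {d : ℕ} (P : Set (Fin d → ℝ)) : Prop :=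
  ∃ w : Fin d → ℤ, IsReflexive ((fun x => x + fun i => (w i : ℝ)) '' P)

/-- With the conventions `e_0 = 0`, `s_0 = 1`, every position `0,…,d-1` of the
`s`-inversion sequence `e` is an ascent (`e i` is the paper's `e_{i+1}`). -/
def allAscents (d : ℕ) (s : Fin d → ℕ) (e : Fin d → ℤ) : Prop :=
  (∀ h : 0 < d, (0 : ℝ) / 1 < (e ⟨0, h⟩ : ℝ) / (s ⟨0, h⟩ : ℝ)) ∧
  ∀ i : Fin d, ∀ hi : (i : ℕ) + 1 < d,
    (e i : ℝ) / (s i : ℝ) < (e ⟨(i : ℕ) + 1, hi⟩ : ℝ) / (s ⟨(i : ℕ) + 1, hi⟩ : ℝ)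

/-- The integer decomposition property. -/
def HasIDP (d : ℕ) (P : Set (Fin d → ℝ)) : Prop :=
  ∀ k : ℕ, 0 < k → ∀ z : Fin d → ℤ,
    (fun i => (z i : ℝ)) ∈ (k : ℝ) • P →
    ∃ x : Fin k → Fin d → ℤ,
      (∀ j, (fun i => (x j i : ℝ)) ∈ P) ∧ ∀ i, (∑ j, x j i) = z i

/-- The integer-point interior condition for the lecture hall polytope. -/
def IntCond (d : ℕ) (hd : 0 < d) (s : Fin d → ℕ) (p : Fin d → ℤ) : Prop :=
  0 < p ⟨0, hd⟩ ∧
  (∀ i : Fin d, ∀ hi : (i : ℕ) + 1 < d,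
      p i * (s ⟨(i : ℕ) + 1, hi⟩ : ℤ) < p ⟨(i : ℕ) + 1, hi⟩ * (s i : ℤ)) ∧
  p ⟨d - 1, Nat.sub_lt hd Nat.one_pos⟩ < (s ⟨d - 1, Nat.sub_lt hd Nat.one_pos⟩ : ℤ)

lemma intCond_of_mem_interior {d : ℕ} (hd : 0 < d) {s : Fin d → ℕ}
    (hpos : ∀ i, 0 < s i) {p : Fin d → ℤ}
    (hmem : (fun i => (p i : ℝ)) ∈ interior (lectureHall d s)) :
    IntCond d hd s p := by
  rw [mem_interior_iff_mem_nhds, Metric.mem_nhds_iff] at hmem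
  obtain ⟨ε, hε, hball⟩ := hmem
  have key : ∀ (k : Fin d) (δ : ℝ), |δ| < ε →
      Function.update (fun i => (p i : ℝ)) k ((p k : ℝ) + δ) ∈ lectureHall d s := by
    intro k δ hδ
    apply hball
    rw [Metric.mem_ball, dist_pi_lt_iff hε]
    intro i
    rcases eq_or_ne i k with rfl | h
    · simpa [Function.update_self, Real.dist_eq] using hδ
    · simp [Function.update_of_ne h, Real.dist_eq]
      exact hε
  refine ⟨?_, ?_, ?_⟩
  · -- 0 < p 0
    have hm := key ⟨0, hd⟩ (-(ε / 2)) (by rw [abs_neg, abs_of_pos (by linarith)]; linarith)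
    obtain ⟨h1, -, -⟩ := hm
    have h1' := h1 hd
    rw [Function.update_self] at h1'
    have hs : (0 : ℝ) < (s ⟨0, hd⟩ : ℝ) := by exact_mod_cast hpos _
    have hx : (0 : ℝ) ≤ (p ⟨0, hd⟩ : ℝ) + -(ε / 2) := by
      by_contra hc
      push_neg at hc
      have := div_neg_of_neg_of_pos hc hs
      linarith
    have : (0 : ℝ) < (p ⟨0, hd⟩ : ℝ) := by linarith
    exact_mod_cast this
  · -- middle inequalities
    intro i hi
    set i' : Fin d := ⟨(i : ℕ) + 1, hi⟩ with hi'
    have hne : i' ≠ i := Fin.ne_of_val_ne (by simp [hi'])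
    have hm := key i (ε / 2) (by rw [abs_of_pos (by linarith)]; linarith)
    obtain ⟨-, h2, -⟩ := hm
    have h2' := h2 i hi
    rw [Function.update_self, Function.update_of_ne hne] at h2'
    have hsi : (0 : ℝ) < (s i : ℝ) := by exact_mod_cast hpos i
    have hsi' : (0 : ℝ) < (s i' : ℝ) := by exact_mod_cast hpos i'
    rw [div_le_div_iff₀ hsi hsi'] at h2'
    have : (p i : ℝ) * (s i' : ℝ) < (p i' : ℝ) * (s i : ℝ) := by nlinarith
    exact_mod_cast this
  · -- last inequality
    set l : Fin d := ⟨d - 1, Nat.sub_lt hd Nat.one_pos⟩ with hl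
    have hm := key l (ε / 2) (by rw [abs_of_pos (by linarith)]; linarith)
    obtain ⟨-, -, h3⟩ := hm
    have h3' := h3 hd
    rw [Function.update_self] at h3'
    have hs : (0 : ℝ) < (s l : ℝ) := by exact_mod_cast hpos l
    rw [div_le_one hs] at h3'
    have : (p l : ℝ) < (s l : ℝ) := by linarith
    exact_mod_cast this

lemma mem_interior_of_intCond {d : ℕ} (hd : 0 < d) {s : Fin d → ℕ}
    (hpos : ∀ i, 0 < s i) {p : Fin d → ℤ} (h : IntCond d hd s p) :
    (fun i => (p i : ℝ)) ∈ interior (lectureHall d s) := by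
  obtain ⟨h0, hmid, hlast⟩ := h
  set T : ℝ := ∑ i, (s i : ℝ) with hT
  have hT1 : (1 : ℝ) ≤ T := by
    calc (1 : ℝ) ≤ (s ⟨0, hd⟩ : ℝ) := by exact_mod_cast hpos _
    _ ≤ T := Finset.single_le_sum (f := fun i => (s i : ℝ))
        (fun i _ => by positivity) (Finset.mem_univ _)
  set ε : ℝ := 1 / (2 * T) with hε
  have hεpos : 0 < ε := by positivity
  have hεT : ε * T = 1 / 2 := by
    rw [hε]; field_simp
  have hεhalf : ε ≤ 1 / 2 := by
    calc ε = ε * 1 := (mul_one ε).symm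
    _ ≤ ε * T := by nlinarith
    _ = 1 / 2 := hεT
  rw [mem_interior]
  refine ⟨Metric.ball _ ε, ?_, Metric.isOpen_ball, Metric.mem_ball_self hεpos⟩
  intro x hx
  rw [Metric.mem_ball, dist_pi_lt_iff hεpos] at hx
  have hx' : ∀ i, |x i - (p i : ℝ)| < ε := fun i => by
    have := hx i; rwa [Real.dist_eq] at this
  refine ⟨?_, ?_, ?_⟩
  · intro h
    have hp1 : (1 : ℝ) ≤ (p ⟨0, h⟩ : ℝ) := by exact_mod_cast h0
    have hs : (0 : ℝ) < (s ⟨0, h⟩ : ℝ) := by exact_mod_cast hpos _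
    have hxb := abs_lt.mp (hx' ⟨0, h⟩)
    apply div_nonneg _ hs.le
    linarith [hxb.1]
  · intro i hi
    set i' : Fin d := ⟨(i : ℕ) + 1, hi⟩ with hi'
    have hsi : (0 : ℝ) < (s i : ℝ) := by exact_mod_cast hpos i
    have hsi' : (0 : ℝ) < (s i' : ℝ) := by exact_mod_cast hpos i'
    rw [div_le_div_iff₀ hsi hsi']
    have hint : (p i : ℝ) * (s i' : ℝ) + 1 ≤ (p i' : ℝ) * (s i : ℝ) := by
      exact_mod_cast hmid i hi
    have hx1 := abs_lt.mp (hx' i)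
    have hx2 := abs_lt.mp (hx' i')
    have hne : i ≠ i' := Fin.ne_of_val_ne (by simp [hi'])
    have hsumN : s i + s i' ≤ ∑ j, s j := by
      calc s i + s i' = ∑ j ∈ ({i, i'} : Finset (Fin d)), s j :=
            (Finset.sum_pair hne).symm
      _ ≤ ∑ j, s j := Finset.sum_le_sum_of_subset (Finset.subset_univ _)
    have hsum : (s i : ℝ) + (s i' : ℝ) ≤ T := by
      rw [hT]
      exact_mod_cast hsumN
    have hεs : ε * ((s i : ℝ) + (s i' : ℝ)) ≤ 1 := by
      calc ε * ((s i : ℝ) + (s i' : ℝ)) ≤ ε * T := by nlinarith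
      _ = 1 / 2 := hεT
      _ ≤ 1 := by norm_num
    nlinarith [hx1.2, hx2.1]
  · intro h
    set l : Fin d := ⟨d - 1, Nat.sub_lt h Nat.one_pos⟩ with hl
    have hs : (0 : ℝ) < (s l : ℝ) := by exact_mod_cast hpos l
    rw [div_le_one hs]
    have hps : (p l : ℝ) ≤ (s l : ℝ) - 1 := by
      have h1 : p l + 1 ≤ (s l : ℤ) := hlast
      have h2 : (p l : ℝ) + 1 ≤ (s l : ℝ) := by exact_mod_cast h1
      linarith
    linarith [(abs_lt.mp (hx' l)).2]

/-- Chaining: any interior integer point satisfies `p i < s i` everywhere. -/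
lemma lt_of_chain {d : ℕ} (hd : 0 < d) {s : Fin d → ℕ} (hpos : ∀ i, 0 < s i)
    {p : Fin d → ℤ}
    (hmid : ∀ i : Fin d, ∀ hi : (i : ℕ) + 1 < d,
      p i * (s ⟨(i : ℕ) + 1, hi⟩ : ℤ) < p ⟨(i : ℕ) + 1, hi⟩ * (s i : ℤ))
    (hlast : p ⟨d - 1, Nat.sub_lt hd Nat.one_pos⟩ <
      (s ⟨d - 1, Nat.sub_lt hd Nat.one_pos⟩ : ℤ)) :
    ∀ i, p i < (s i : ℤ) := by
  suffices h : ∀ n, ∀ i : Fin d, d - 1 - (i : ℕ) ≤ n → p i < (s i : ℤ) by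
    intro i; exact h _ i le_rfl
  intro n
  induction n with
  | zero =>
    intro i hi
    have hiv : (i : ℕ) = d - 1 := by have := i.isLt; omega
    have : i = ⟨d - 1, Nat.sub_lt hd Nat.one_pos⟩ := Fin.ext hiv
    rw [this]; exact hlast
  | succ n ih =>
    intro i hi
    by_cases hc : (i : ℕ) + 1 < d
    · have h1 := hmid i hc
      have h2 := ih ⟨(i : ℕ) + 1, hc⟩ (by simp; omega)
      have hsi : (0 : ℤ) < (s i : ℤ) := by exact_mod_cast hpos i
      have hsi' : (0 : ℤ) < (s ⟨(i : ℕ) + 1, hc⟩ : ℤ) := by exact_mod_cast hpos _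
      nlinarith
    · have hiv : (i : ℕ) = d - 1 := by have := i.isLt; omega
      have : i = ⟨d - 1, Nat.sub_lt hd Nat.one_pos⟩ := Fin.ext hiv
      rw [this]; exact hlast

/-- The standard point `q i = s i - 1` is an interior point when `2 ≤ s 0`. -/
lemma intCond_std {d : ℕ} (hd : 0 < d) {s : Fin d → ℕ} (hpos : ∀ i, 0 < s i)
    (hinc : StrictMono s) (hs0 : 2 ≤ s ⟨0, hd⟩) :
    IntCond d hd s (fun i => (s i : ℤ) - 1) := by
  refine ⟨?_, ?_, ?_⟩
  · show (0 : ℤ) < (s ⟨0, hd⟩ : ℤ) - 1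
    have : (2 : ℤ) ≤ (s ⟨0, hd⟩ : ℤ) := by exact_mod_cast hs0
    omega
  · intro i hi
    set i' : Fin d := ⟨(i : ℕ) + 1, hi⟩ with hi'
    show ((s i : ℤ) - 1) * (s i' : ℤ) < ((s i' : ℤ) - 1) * (s i : ℤ)
    have hlt : s i < s i' := hinc (by rw [Fin.lt_def]; simp [hi'])
    have hlt' : (s i : ℤ) < (s i' : ℤ) := by exact_mod_cast hlt
    nlinarith
  · show (s ⟨d - 1, Nat.sub_lt hd Nat.one_pos⟩ : ℤ) - 1 <
      (s ⟨d - 1, Nat.sub_lt hd Nat.one_pos⟩ : ℤ)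
    omega

/-- Modified point: decrease coordinate `k` of the standard point by one more. -/
lemma intCond_update {d : ℕ} (hd : 0 < d) {s : Fin d → ℕ} (hpos : ∀ i, 0 < s i)
    (hinc : StrictMono s) (hs0 : 2 ≤ s ⟨0, hd⟩) (k : Fin d)
    (hk0 : (k : ℕ) = 0 → 3 ≤ s k)
    (hkpred : ∀ j : Fin d, ∀ hj : (j : ℕ) + 1 < d,
      k = ⟨(j : ℕ) + 1, hj⟩ → 2 * s j < s k) :
    IntCond d hd s
      (Function.update (fun i => (s i : ℤ) - 1) k ((s k : ℤ) - 2)) := by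
  refine ⟨?_, ?_, ?_⟩
  · simp only [Function.update_apply]
    split_ifs with h
    · have h3 : 3 ≤ s k := hk0 (congrArg Fin.val h).symm
      have : (3 : ℤ) ≤ (s k : ℤ) := by exact_mod_cast h3
      omega
    · have : (2 : ℤ) ≤ (s ⟨0, hd⟩ : ℤ) := by exact_mod_cast hs0
      omega
  · intro i hi
    set i' : Fin d := ⟨(i : ℕ) + 1, hi⟩ with hi'
    have hii' : i ≠ i' := Fin.ne_of_val_ne (by simp [hi'])
    have hlt : s i < s i' := hinc (by rw [Fin.lt_def]; simp [hi'])
    have hlt' : (s i : ℤ) < (s i' : ℤ) := by exact_mod_cast hlt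
    have hsi : (0 : ℤ) < (s i : ℤ) := by exact_mod_cast hpos i
    have hsi' : (0 : ℤ) < (s i' : ℤ) := by exact_mod_cast hpos i'
    simp only [Function.update_apply]
    split_ifs with h1 h2 h2
    · exact absurd (h1.trans h2.symm) hii'
    · rw [← h1]
      nlinarith
    · have hp : 2 * s i < s k := hkpred i hi h2.symm
      have hp' : 2 * (s i : ℤ) < (s k : ℤ) := by exact_mod_cast hp
      rw [← h2] at hp' ⊢
      nlinarith
    · nlinarith
  · simp only [Function.update_apply]
    split_ifs with h
    · rw [h]
      omega
    · omega

/-- Under the conditions `s 0 = 2` and `s (i+1) ≤ 2 * s i`, any interior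
integer point equals the standard point. -/
lemma eq_std {d : ℕ} (hd : 0 < d) {s : Fin d → ℕ} (hpos : ∀ i, 0 < s i)
    (hs0 : s ⟨0, hd⟩ = 2)
    (h2 : ∀ i : Fin d, ∀ hi : (i : ℕ) + 1 < d, s ⟨(i : ℕ) + 1, hi⟩ ≤ 2 * s i)
    {p : Fin d → ℤ} (h : IntCond d hd s p) :
    ∀ i, p i = (s i : ℤ) - 1 := by
  obtain ⟨h0, hmid, hlast⟩ := h
  have hub := lt_of_chain hd hpos hmid hlast
  suffices hh : ∀ n, ∀ i : Fin d, (i : ℕ) ≤ n → p i = (s i : ℤ) - 1 by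
    intro i; exact hh _ i le_rfl
  intro n
  induction n with
  | zero =>
    intro i hi
    have : i = ⟨0, hd⟩ := Fin.ext (show (i : ℕ) = 0 by omega)
    rw [this]
    have hs2 : (s ⟨0, hd⟩ : ℤ) = 2 := by exact_mod_cast hs0
    have := hub ⟨0, hd⟩
    omega
  | succ n ih =>
    intro i hi
    by_cases hc : (i : ℕ) ≤ n
    · exact ih i hc
    · have hiv : (i : ℕ) = n + 1 := by omega
      have hj : n < d := by have := i.isLt; omega
      set j : Fin d := ⟨n, Nat.lt_of_succ_lt (by omega)⟩ with hjdef
      have hj1 : (j : ℕ) + 1 < d := by simp [hjdef]; omega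
      have hji : (⟨(j : ℕ) + 1, hj1⟩ : Fin d) = i := Fin.ext (by simp [hjdef]; omega)
      have hm := hmid j hj1
      rw [hji] at hm
      have hpj : p j = (s j : ℤ) - 1 := ih j (by simp [hjdef])
      have hsle : s i ≤ 2 * s j := by
        have := h2 j hj1
        rwa [hji] at this
      have hsle' : (s i : ℤ) ≤ 2 * (s j : ℤ) := by exact_mod_cast hsle
      have hsj : (0 : ℤ) < (s j : ℤ) := by exact_mod_cast hpos j
      have hsi : (0 : ℤ) < (s i : ℤ) := by exact_mod_cast hpos i
      have hubi := hub i
      rw [hpj] at hm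
      nlinarith

/-- for strictly increasing `s`, the interior of `P_d^(s)` contains
exactly one lattice point iff `s_1 = 2` and `s_{i+1} ≤ 2 s_i` for all `i`, and in
that case the unique interior lattice point is `(s_1 - 1, …, s_d - 1)`. -/
theorem stmt_0 (d : ℕ) (hd : 0 < d) (s : Fin d → ℕ) (hpos : ∀ i, 0 < s i)
    (hinc : StrictMono s) :
    ((∃! p : Fin d → ℤ, (fun i => (p i : ℝ)) ∈ interior (lectureHall d s)) ↔
      (s ⟨0, hd⟩ = 2 ∧
        ∀ i : Fin d, ∀ hi : (i : ℕ) + 1 < d, s ⟨(i : ℕ) + 1, hi⟩ ≤ 2 * s i)) ∧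
    ((s ⟨0, hd⟩ = 2 ∧
        ∀ i : Fin d, ∀ hi : (i : ℕ) + 1 < d, s ⟨(i : ℕ) + 1, hi⟩ ≤ 2 * s i) →
      ∀ p : Fin d → ℤ, (fun i => (p i : ℝ)) ∈ interior (lectureHall d s) →
        p = fun i => (s i : ℤ) - 1) := by
  constructor
  · constructor
    · rintro ⟨p, hp, huniq⟩
      have hcond := intCond_of_mem_interior hd hpos hp
      obtain ⟨h0, hmid, hlast⟩ := hcond
      have hub := lt_of_chain hd hpos hmid hlast
      have hs0 : 2 ≤ s ⟨0, hd⟩ := by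
        have h1 := hub ⟨0, hd⟩
        have h2 : (0 : ℤ) < p ⟨0, hd⟩ := h0
        have : (1 : ℤ) < (s ⟨0, hd⟩ : ℤ) := by omega
        exact_mod_cast this
      have hq := intCond_std hd hpos hinc hs0
      have hqp : (fun i => (s i : ℤ) - 1) = p :=
        huniq _ (mem_interior_of_intCond hd hpos hq)
      constructor
      · by_contra hne
        have hs3 : 3 ≤ s ⟨0, hd⟩ := by omega
        have hq' := intCond_update hd hpos hinc hs0 ⟨0, hd⟩ (fun _ => hs3)
          (fun j hj hjk => by
            exfalso
            have : (0 : ℕ) = (j : ℕ) + 1 := congrArg Fin.val hjk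
            omega)
        have hq'p := huniq _ (mem_interior_of_intCond hd hpos hq')
        have heq : Function.update (fun i => (s i : ℤ) - 1) ⟨0, hd⟩
            ((s ⟨0, hd⟩ : ℤ) - 2) = (fun i => (s i : ℤ) - 1) := by
          rw [hq'p, ← hqp]
        have := congrFun heq ⟨0, hd⟩
        rw [Function.update_self] at this
        omega
      · intro i hi
        by_contra hne
        push_neg at hne
        set k : Fin d := ⟨(i : ℕ) + 1, hi⟩ with hk
        have hq' := intCond_update hd hpos hinc hs0 k
          (fun h => by exfalso; simp [hk] at h)
          (fun j hj hjk => by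
            have hji : j = i := Fin.ext (by
              have : (k : ℕ) = (j : ℕ) + 1 := congrArg Fin.val hjk
              simp [hk] at this
              omega)
            rw [hji]
            omega)
        have hq'p := huniq _ (mem_interior_of_intCond hd hpos hq')
        have heq : Function.update (fun i => (s i : ℤ) - 1) k
            ((s k : ℤ) - 2) = (fun i => (s i : ℤ) - 1) := by
          rw [hq'p, ← hqp]
        have := congrFun heq k
        rw [Function.update_self] at this
        omega
    · rintro ⟨hs0, h2⟩
      have hs0' : 2 ≤ s ⟨0, hd⟩ := hs0.ge
      refine ⟨fun i => (s i : ℤ) - 1,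
        mem_interior_of_intCond hd hpos (intCond_std hd hpos hinc hs0'), ?_⟩
      intro p hp
      funext i
      exact eq_std hd hpos hs0 h2 (intCond_of_mem_interior hd hpos hp) i
  · rintro ⟨hs0, h2⟩ p hp
    funext i
    exact eq_std hd hpos hs0 h2 (intCond_of_mem_interior hd hpos hp) i
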